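/- Work in ℂ³ ⊗ ℂ³ and let ω = e^{2πi/3}. The linear span S_{P,1} of the Parthasarathy space S_P and the van der Monde vector z₁ has product index 3: the only one-dimensional subspaces of S_{P,1} spanned by product vectors are those spanned by z₁ = (|0⟩+|1⟩+|2⟩) ⊗ (|0⟩+|1⟩+|2⟩), by (|0⟩ − 2ω²|1⟩ + ω|2⟩) ⊗ (|0⟩ − 2ω|1⟩ + ω²|2⟩), and by (|0⟩ − 2ω|1⟩ + ω²|2⟩) ⊗ (|0⟩ − 2ω²|1⟩ + ω|2⟩). -/

import Mathlib

noncomputable section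

abbrev H3 : Type := EuclideanSpace ℂ (Fin 3)
abbrev H33 : Type := EuclideanSpace ℂ (Fin 3 × Fin 3)

/-- standard basis vector of ℂ³ -/
def ket3 (i : Fin 3) : H3 := EuclideanSpace.single i 1

/-- elementary tensor of two vectors of ℂ³, viewed in ℂ³ ⊗ ℂ³ ≅ ℂ⁹ -/
def tp (u v : H3) : H33 := WithLp.toLp 2 (fun p : Fin 3 × Fin 3 => u p.1 * v p.2)

/-- the set of one-dimensional subspaces of `T` spanned by (nonzero) product vectors -/
def prodLines (T : Submodule ℂ H33) : Set (Submodule ℂ H33) :=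
  {L | ∃ ξ : H33, ξ ≠ 0 ∧ ξ ∈ T ∧ (∃ u v : H3, ξ = tp u v) ∧ L = Submodule.span ℂ {ξ}}

/-- the vector |0⟩ + λ|1⟩ + λ²|2⟩ -/
def vand (lam : ℂ) : H3 := WithLp.toLp 2 (fun i : Fin 3 => lam ^ (i : ℕ))

/-- the van der Monde vector z_λ -/
def zv (lam : ℂ) : H33 := tp (vand lam) (vand lam)

/-- the van der Monde vector z_∞ = |2⟩ ⊗ |2⟩ -/
def zvinf : H33 := tp (ket3 2) (ket3 2)

/-- the span of all van der Monde vectors -/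
def FP : Submodule ℂ H33 := Submodule.span ℂ (insert zvinf (Set.range zv))

/-- the Parthasarathy completely entangled subspace of ℂ³ ⊗ ℂ³ -/
def SP33 : Submodule ℂ H33 := FPᗮ

/-- a primitive cube root of unity -/
def ω : ℂ := Complex.exp (2 * Real.pi * Complex.I / 3)

lemma hw3 : ω ^ 3 = 1 := by
  rw [ω, ← Complex.exp_nat_mul]
  norm_num
  rw [mul_comm (3:ℂ), div_mul_cancel₀, Complex.exp_two_pi_mul_I]
  norm_num

lemma hw_ne_one : ω ≠ 1 := by
  have h1 : ω = Complex.exp ((2*Real.pi/3 : ℝ) * Complex.I) := by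
    rw [ω]; push_cast; ring_nf
  have h2 : ω.im = Real.sin (2*Real.pi/3) := by
    rw [h1, Complex.exp_ofReal_mul_I_im]
  have h3 : 0 < Real.sin (2*Real.pi/3) := by
    apply Real.sin_pos_of_pos_of_lt_pi
    · positivity
    · nlinarith [Real.pi_pos]
  intro h
  rw [h] at h2
  simp at h2
  linarith

lemma hw2 : ω ^ 2 + ω + 1 = 0 := by
  have h := hw3
  have : (ω - 1) * (ω ^ 2 + ω + 1) = 0 := by linear_combination h
  rcases mul_eq_zero.mp this with h' | h'
  · exact absurd (sub_eq_zero.mp h') hw_ne_one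
  · exact h'

lemma hw_ne_zero : ω ≠ 0 := by
  intro h
  have := hw3
  rw [h] at this
  norm_num at this

lemma memSP_iff (x : H33) : x ∈ SP33 ↔
    (x (0,0) = 0 ∧ x (0,1) + x (1,0) = 0 ∧ x (0,2) + x (1,1) + x (2,0) = 0 ∧
     x (1,2) + x (2,1) = 0 ∧ x (2,2) = 0) := by
  constructor
  · intro hx
    rw [SP33, Submodule.mem_orthogonal] at hx
    have hz : ∀ lam : ℂ, (inner ℂ (zv lam) x : ℂ) = 0 := fun lam =>
      hx _ (Submodule.subset_span (Set.mem_insert_iff.mpr (Or.inr ⟨lam, rfl⟩)))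
    have hinf : (inner ℂ zvinf x : ℂ) = 0 :=
      hx _ (Submodule.subset_span (Set.mem_insert _ _))
    have h0 := hz 0
    have h1 := hz 1
    have h2 := hz 2
    have h3 := hz 3
    rw [PiLp.inner_apply] at h0 h1 h2 h3 hinf
    simp [Fintype.sum_prod_type, Fin.sum_univ_succ, zv, zvinf, tp, vand, ket3,
      RCLike.inner_apply, Complex.conj_ofNat, EuclideanSpace.single_apply] at h0 h1 h2 h3 hinf
    refine ⟨by linear_combination h0, ?_, ?_, ?_, by linear_combination hinf⟩
    · linear_combination 3*h1 - (3/2)*h2 + (1/3)*h3 - (11/6)*h0 - 6*hinf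
    · linear_combination (-5/2)*h1 + 2*h2 - (1/2)*h3 + h0 + 11*hinf
    · linear_combination (1/2)*h1 - (1/2)*h2 + (1/6)*h3 - (1/6)*h0 - 6*hinf
  · rintro ⟨s0, s1, s2, s3, s4⟩
    rw [SP33, Submodule.mem_orthogonal]
    intro y hy
    induction hy using Submodule.span_induction with
    | mem y hy =>
      rcases Set.mem_insert_iff.mp hy with h | ⟨lam, h⟩
      · subst h
        rw [PiLp.inner_apply]
        simp [Fintype.sum_prod_type, Fin.sum_univ_succ, zvinf, tp, ket3,
          RCLike.inner_apply, EuclideanSpace.single_apply]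
        linear_combination s4
      · subst h
        rw [PiLp.inner_apply]
        simp [Fintype.sum_prod_type, Fin.sum_univ_succ, zv, tp, vand,
          RCLike.inner_apply, map_pow]
        linear_combination (1:ℂ)*s0 + ((starRingEnd ℂ) lam)*s1 + ((starRingEnd ℂ) lam)^2*s2
          + ((starRingEnd ℂ) lam)^3*s3 + ((starRingEnd ℂ) lam)^4*s4
    | zero => simp
    | add a b _ _ ha hb => rw [inner_add_left, ha, hb]; ring
    | smul c a _ ha => rw [inner_smul_left, ha]; ring

lemma zv_one_apply (p : Fin 3 × Fin 3) : zv 1 p = 1 := by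
  simp [zv, tp, vand]

lemma memT_iff (x : H33) : x ∈ SP33 ⊔ Submodule.span ℂ {zv 1} ↔
    ∃ c : ℂ, x (0,0) = c ∧ x (0,1) + x (1,0) = 2*c ∧ x (0,2) + x (1,1) + x (2,0) = 3*c ∧
     x (1,2) + x (2,1) = 2*c ∧ x (2,2) = c := by
  constructor
  · intro hx
    obtain ⟨y, hy, z, hz, hyz⟩ := Submodule.mem_sup.mp hx
    obtain ⟨c, rfl⟩ := Submodule.mem_span_singleton.mp hz
    obtain ⟨e0, e1, e2, e3, e4⟩ := (memSP_iff y).mp hy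
    subst hyz
    simp only [PiLp.add_apply, PiLp.smul_apply, zv_one_apply, smul_eq_mul, mul_one]
    exact ⟨c, by linear_combination e0, by linear_combination e1, by linear_combination e2,
      by linear_combination e3, by linear_combination e4⟩
  · rintro ⟨c, e0, e1, e2, e3, e4⟩
    have hmem : x - c • zv 1 ∈ SP33 := by
      rw [memSP_iff]
      simp only [PiLp.sub_apply, PiLp.smul_apply, zv_one_apply, smul_eq_mul, mul_one]
      refine ⟨by linear_combination e0, by linear_combination e1, by linear_combination e2,
        by linear_combination e3, by linear_combination e4⟩
    have hx : x = (x - c • zv 1) + c • zv 1 := by abel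
    rw [hx]
    exact Submodule.mem_sup.mpr ⟨_, hmem, _, Submodule.mem_span_singleton.mpr ⟨c, rfl⟩, rfl⟩

lemma classify (u v : H3) (hne : tp u v ≠ 0)
    (e1 : u 0 * v 1 + u 1 * v 0 = 2 * (u 0 * v 0))
    (e2 : u 0 * v 2 + u 1 * v 1 + u 2 * v 0 = 3 * (u 0 * v 0))
    (e3 : u 1 * v 2 + u 2 * v 1 = 2 * (u 0 * v 0))
    (e4 : u 2 * v 2 = u 0 * v 0) :
    u 0 * v 0 ≠ 0 ∧
    ((u 1 = u 0 ∧ u 2 = u 0 ∧ v 1 = v 0 ∧ v 2 = v 0) ∨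
     (u 1 = -2*ω^2 * u 0 ∧ u 2 = ω * u 0 ∧ v 1 = -2*ω * v 0 ∧ v 2 = ω^2 * v 0) ∨
     (u 1 = -2*ω * u 0 ∧ u 2 = ω^2 * u 0 ∧ v 1 = -2*ω^2 * v 0 ∧ v 2 = ω * v 0)) := by
  have hexists : ∃ p : Fin 3 × Fin 3, u p.1 * v p.2 ≠ 0 := by
    by_contra h
    push_neg at h
    exact hne (PiLp.ext fun p => h p)
  obtain ⟨p, hp⟩ := hexists
  have hup : u p.1 ≠ 0 := left_ne_zero_of_mul hp
  have hvp : v p.2 ≠ 0 := right_ne_zero_of_mul hp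
  have hc : u 0 * v 0 ≠ 0 := by
    intro hc0
    have hvall : ∀ j : Fin 3, v j = 0 := by
      by_cases h0 : u 0 = 0
      · by_cases h1 : u 1 = 0
        · have h2 : u 2 ≠ 0 := by
            intro h2
            have i := p.1
            have := hup
            fin_cases i
            all_goals first
              | exact hup (by fin_cases p <;> simp_all)
          have hv0 : v 0 = 0 := by
            have : u 2 * v 0 = 0 := by linear_combination e2 + 3*hc0 - v 2 * h0 - v 1 * h1
            exact (mul_eq_zero.mp this).resolve_left h2
          have hv1 : v 1 = 0 := by
            have : u 2 * v 1 = 0 := by linear_combination e3 + 2*hc0 - v 2 * h1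
            exact (mul_eq_zero.mp this).resolve_left h2
          have hv2 : v 2 = 0 := by
            have : u 2 * v 2 = 0 := by linear_combination e4 + hc0
            exact (mul_eq_zero.mp this).resolve_left h2
          intro j; fin_cases j <;> assumption
        · have hv0 : v 0 = 0 := by
            have : u 1 * v 0 = 0 := by linear_combination e1 + 2*hc0 - v 1 * h0
            exact (mul_eq_zero.mp this).resolve_left h1
          have hv1 : v 1 = 0 := by
            have : u 1 * v 1 = 0 := by linear_combination e2 + 3*hc0 - v 2 * h0 - u 2 * hv0
            exact (mul_eq_zero.mp this).resolve_left h1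
          have hv2 : v 2 = 0 := by
            have : u 1 * v 2 = 0 := by linear_combination e3 + 2*hc0 - u 2 * hv1
            exact (mul_eq_zero.mp this).resolve_left h1
          intro j; fin_cases j <;> assumption
      · have hv0 : v 0 = 0 := (mul_eq_zero.mp hc0).resolve_left h0
        have hv1 : v 1 = 0 := by
          have : u 0 * v 1 = 0 := by linear_combination e1 + 2*hc0 - u 1 * hv0
          exact (mul_eq_zero.mp this).resolve_left h0
        have hv2 : v 2 = 0 := by
          have : u 0 * v 2 = 0 := by linear_combination e2 + 3*hc0 - u 1 * hv1 - u 2 * hv0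
          exact (mul_eq_zero.mp this).resolve_left h0
        intro j; fin_cases j <;> assumption
    exact hvp (hvall p.2)
  refine ⟨hc, ?_⟩
  have hu0 : u 0 ≠ 0 := left_ne_zero_of_mul hc
  have hv0 : v 0 ≠ 0 := right_ne_zero_of_mul hc
  have hu2 : u 2 ≠ 0 := fun h => hc (by rw [← e4, h, zero_mul])
  have hv2 : v 2 ≠ 0 := fun h => hc (by rw [← e4, h, mul_zero])
  set a := u 1 / u 0 with ha_def
  set b := u 2 / u 0 with hb_def
  set d := v 1 / v 0 with hd_def
  set e := v 2 / v 0 with he_def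
  have hua : u 1 = a * u 0 := by rw [ha_def]; field_simp
  have hub : u 2 = b * u 0 := by rw [hb_def]; field_simp
  have hvd : v 1 = d * v 0 := by rw [hd_def]; field_simp
  have hve : v 2 = e * v 0 := by rw [he_def]; field_simp
  have hb : b ≠ 0 := div_ne_zero hu2 hu0
  have f1 : a + d = 2 := by
    apply mul_right_cancel₀ hc
    linear_combination e1 - v 0 * hua - u 0 * hvd
  have f2 : b + a*d + e = 3 := by
    apply mul_right_cancel₀ hc
    linear_combination e2 - v 0 * hub - u 1 * hvd - d * v 0 * hua - u 0 * hve
  have f3 : a*e + b*d = 2 := by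
    apply mul_right_cancel₀ hc
    linear_combination e3 - u 1 * hve - e * v 0 * hua - u 2 * hvd - d * v 0 * hub
  have f4 : b*e = 1 := by
    apply mul_right_cancel₀ hc
    linear_combination e4 - u 2 * hve - e * v 0 * hub
  clear e1 e2 e3 e4 hp hup hvp hne
  have hi : a + b^2*(2-a) = 2*b := by linear_combination b*f3 - a*f4 - b^2*f1
  have hii : b^2 + 2*a*b - a^2*b + 1 = 3*b := by linear_combination b*f2 - f4 - a*b*f1
  by_cases hb1 : b = 1
  · left
    have he1 : e = 1 := by linear_combination f4 - e*hb1
    have ha1 : a = 1 := by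
      have hsq : (a - 1)^2 = 0 := by
        linear_combination -hii + (b + 2*a - a^2 - 2)*hb1
      exact sub_eq_zero.mp (pow_eq_zero_iff (two_ne_zero) |>.mp hsq)
    have hd1 : d = 1 := by linear_combination f1 - ha1
    exact ⟨by rw [hua, ha1, one_mul], by rw [hub, hb1, one_mul],
      by rw [hvd, hd1, one_mul], by rw [hve, he1, one_mul]⟩
  · have hb1' : (1:ℂ) + b ≠ 0 := by
      intro h
      have h4 : (4:ℂ) = 0 := by linear_combination hi + ((a-2)*b + 4 - a) * h
      norm_num at h4
    have ha' : a * (1 + b) = 2 * b := by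
      have hfac : (a*(1+b) - 2*b) * (b - 1) = 0 := by linear_combination -hi
      rcases mul_eq_zero.mp hfac with h | h
      · linear_combination h
      · exact absurd (sub_eq_zero.mp h) hb1
    have h5 : (b - 1) * (b^3 - 1) = 0 := by
      linear_combination (1+b)^2 * hii + (a*b + a*b^2 - 2*b) * ha'
    have hbsq : b^2 + b + 1 = 0 := by
      have h6 : b^3 - 1 = 0 := by
        rcases mul_eq_zero.mp h5 with h | h
        · exact absurd (sub_eq_zero.mp h) hb1
        · exact h
      have h7 : (b - 1) * (b^2 + b + 1) = 0 := by linear_combination h6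
      rcases mul_eq_zero.mp h7 with h | h
      · exact absurd (sub_eq_zero.mp h) hb1
      · exact h
    have h8 : (b - ω) * (b - ω^2) = 0 := by
      linear_combination hbsq - b*hw2 + hw3
    rcases mul_eq_zero.mp h8 with h | h
    · right; left
      have hbw : b = ω := sub_eq_zero.mp h
      have hew : e = ω^2 := by linear_combination ω^2*f4 - e*hw3 - ω^2*e*hbw
      have haw : a = -2*ω^2 := by
        have h9 : -ω^2 * a = 2*ω := by linear_combination ha' - a*hw2 + (2 - a)*hbw
        linear_combination (-ω)*h9 - a*hw3
      have hdw : d = -2*ω := by linear_combination f1 - haw + 2*hw2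
      exact ⟨by rw [hua, haw], by rw [hub, hbw], by rw [hvd, hdw], by rw [hve, hew]⟩
    · right; right
      have hbw : b = ω^2 := sub_eq_zero.mp h
      have hew : e = ω := by linear_combination ω*f4 - e*hw3 - ω*e*hbw
      have haw : a = -2*ω := by
        have h9 : -ω * a = 2*ω^2 := by linear_combination ha' - a*hw2 + (2 - a)*hbw
        linear_combination (-ω^2)*h9 - a*hw3 - 2*ω*hw3
      have hdw : d = -2*ω^2 := by linear_combination f1 - haw + 2*hw2
      exact ⟨by rw [hua, haw], by rw [hub, hbw], by rw [hvd, hdw], by rw [hve, hew]⟩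

theorem statement13 :
    prodLines (SP33 ⊔ Submodule.span ℂ {zv 1}) =
      {Submodule.span ℂ {zv 1},
       Submodule.span ℂ
         {tp (ket3 0 - (2 * ω ^ 2) • ket3 1 + ω • ket3 2)
             (ket3 0 - (2 * ω) • ket3 1 + ω ^ 2 • ket3 2)},
       Submodule.span ℂ
         {tp (ket3 0 - (2 * ω) • ket3 1 + ω ^ 2 • ket3 2)
             (ket3 0 - (2 * ω ^ 2) • ket3 1 + ω • ket3 2)}} ∧
    (prodLines (SP33 ⊔ Submodule.span ℂ {zv 1})).ncard = 3 := by
  set wl : H3 := ket3 0 - (2 * ω ^ 2) • ket3 1 + ω • ket3 2 with hwl_def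
  set wr : H3 := ket3 0 - (2 * ω) • ket3 1 + ω ^ 2 • ket3 2 with hwr_def
  have hwl0 : wl 0 = 1 := by simp [hwl_def, ket3, EuclideanSpace.single_apply]
  have hwl1 : wl 1 = -(2 * ω ^ 2) := by simp [hwl_def, ket3, EuclideanSpace.single_apply]
  have hwl2 : wl 2 = ω := by simp [hwl_def, ket3, EuclideanSpace.single_apply]
  have hwr0 : wr 0 = 1 := by simp [hwr_def, ket3, EuclideanSpace.single_apply]
  have hwr1 : wr 1 = -(2 * ω) := by simp [hwr_def, ket3, EuclideanSpace.single_apply]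
  have hwr2 : wr 2 = ω ^ 2 := by simp [hwr_def, ket3, EuclideanSpace.single_apply]
  have key : prodLines (SP33 ⊔ Submodule.span ℂ {zv 1}) =
      {Submodule.span ℂ {zv 1}, Submodule.span ℂ {tp wl wr}, Submodule.span ℂ {tp wr wl}} := by
    ext L
    simp only [prodLines, Set.mem_setOf_eq, Set.mem_insert_iff, Set.mem_singleton_iff]
    constructor
    · rintro ⟨ξ, hξ0, hξT, ⟨u, v, rfl⟩, rfl⟩
      obtain ⟨c, g0, g1, g2, g3, g4⟩ := (memT_iff _).mp hξT
      have g0' : u 0 * v 0 = c := g0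
      have g1' : u 0 * v 1 + u 1 * v 0 = 2*c := g1
      have g2' : u 0 * v 2 + u 1 * v 1 + u 2 * v 0 = 3*c := g2
      have g3' : u 1 * v 2 + u 2 * v 1 = 2*c := g3
      have g4' : u 2 * v 2 = c := g4
      obtain ⟨hc, hcase⟩ := classify u v hξ0
        (by linear_combination g1' - 2*g0') (by linear_combination g2' - 3*g0')
        (by linear_combination g3' - 2*g0') (by linear_combination g4' - g0')
      have hcu : IsUnit (u 0 * v 0) := isUnit_iff_ne_zero.mpr hc
      rcases hcase with ⟨h1, h2, h3, h4⟩ | ⟨h1, h2, h3, h4⟩ | ⟨h1, h2, h3, h4⟩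
      · left
        have heq : tp u v = (u 0 * v 0) • zv 1 := by
          ext p
          obtain ⟨i, j⟩ := p
          show u i * v j = (u 0 * v 0) * zv 1 (i, j)
          rw [zv_one_apply]
          fin_cases i <;> fin_cases j <;> simp [h1, h2, h3, h4] <;> ring
        rw [heq, Submodule.span_singleton_smul_eq hcu]
      · right; left
        have heq : tp u v = (u 0 * v 0) • tp wl wr := by
          ext p
          obtain ⟨i, j⟩ := p
          show u i * v j = (u 0 * v 0) * (wl i * wr j)
          fin_cases i <;> fin_cases j <;>
            simp [h1, h2, h3, h4, hwl0, hwl1, hwl2, hwr0, hwr1, hwr2] <;> ring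
        rw [heq, Submodule.span_singleton_smul_eq hcu]
      · right; right
        have heq : tp u v = (u 0 * v 0) • tp wr wl := by
          ext p
          obtain ⟨i, j⟩ := p
          show u i * v j = (u 0 * v 0) * (wr i * wl j)
          fin_cases i <;> fin_cases j <;>
            simp [h1, h2, h3, h4, hwl0, hwl1, hwl2, hwr0, hwr1, hwr2] <;> ring
        rw [heq, Submodule.span_singleton_smul_eq hcu]
    · rintro (rfl | rfl | rfl)
      · refine ⟨zv 1, ?_, ?_, ⟨vand 1, vand 1, rfl⟩, rfl⟩
        · intro h
          have h' : zv 1 (0,0) = 0 := congrArg (fun x : H33 => x (0,0)) h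
          rw [zv_one_apply] at h'
          exact one_ne_zero h'
        · refine (memT_iff _).mpr ⟨1, ?_, ?_, ?_, ?_, ?_⟩ <;>
            simp [zv_one_apply] <;> norm_num
      · refine ⟨tp wl wr, ?_, ?_, ⟨wl, wr, rfl⟩, rfl⟩
        · intro h
          have h' : wl 0 * wr 0 = 0 := congrArg (fun x : H33 => x (0,0)) h
          rw [hwl0, hwr0, one_mul] at h'
          exact one_ne_zero h'
        · refine (memT_iff _).mpr ⟨1, ?_, ?_, ?_, ?_, ?_⟩
          · show wl 0 * wr 0 = 1
            rw [hwl0, hwr0]; ring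
          · show wl 0 * wr 1 + wl 1 * wr 0 = 2*1
            rw [hwl0, hwl1, hwr0, hwr1]; linear_combination -2*hw2
          · show wl 0 * wr 2 + wl 1 * wr 1 + wl 2 * wr 0 = 3*1
            rw [hwl0, hwl1, hwl2, hwr0, hwr1, hwr2]; linear_combination hw2 + 4*hw3
          · show wl 1 * wr 2 + wl 2 * wr 1 = 2*1
            rw [hwl1, hwl2, hwr1, hwr2]; linear_combination -2*ω*hw3 - 2*hw2
          · show wl 2 * wr 2 = 1
            rw [hwl2, hwr2]; linear_combination hw3
      · refine ⟨tp wr wl, ?_, ?_, ⟨wr, wl, rfl⟩, rfl⟩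
        · intro h
          have h' : wr 0 * wl 0 = 0 := congrArg (fun x : H33 => x (0,0)) h
          rw [hwl0, hwr0, one_mul] at h'
          exact one_ne_zero h'
        · refine (memT_iff _).mpr ⟨1, ?_, ?_, ?_, ?_, ?_⟩
          · show wr 0 * wl 0 = 1
            rw [hwl0, hwr0]; ring
          · show wr 0 * wl 1 + wr 1 * wl 0 = 2*1
            rw [hwl0, hwl1, hwr0, hwr1]; linear_combination -2*hw2
          · show wr 0 * wl 2 + wr 1 * wl 1 + wr 2 * wl 0 = 3*1
            rw [hwl0, hwl1, hwl2, hwr0, hwr1, hwr2]; linear_combination hw2 + 4*hw3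
          · show wr 1 * wl 2 + wr 2 * wl 1 = 2*1
            rw [hwl1, hwl2, hwr1, hwr2]; linear_combination -2*ω*hw3 - 2*hw2
          · show wr 2 * wl 2 = 1
            rw [hwl2, hwr2]; linear_combination hw3
  -- distinctness
  have hAB : Submodule.span ℂ {zv 1} ≠ Submodule.span ℂ {tp wl wr} := by
    intro h
    have hm : tp wl wr ∈ Submodule.span ℂ {zv 1} := h ▸ Submodule.mem_span_singleton_self _
    obtain ⟨k, hk⟩ := Submodule.mem_span_singleton.mp hm
    have e00 : k * zv 1 (0,0) = wl 0 * wr 0 := congrArg (fun x : H33 => x (0,0)) hk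
    have e01 : k * zv 1 (0,1) = wl 0 * wr 1 := congrArg (fun x : H33 => x (0,1)) hk
    rw [zv_one_apply, mul_one, hwl0, hwr0, one_mul] at e00
    rw [zv_one_apply, mul_one, hwl0, hwr1, one_mul, e00] at e01
    have : (3:ℂ)/4 = 0 := by linear_combination hw2 - (1/4)*(2*ω+1)*e01
    norm_num at this
  have hAC : Submodule.span ℂ {zv 1} ≠ Submodule.span ℂ {tp wr wl} := by
    intro h
    have hm : tp wr wl ∈ Submodule.span ℂ {zv 1} := h ▸ Submodule.mem_span_singleton_self _
    obtain ⟨k, hk⟩ := Submodule.mem_span_singleton.mp hm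
    have e00 : k * zv 1 (0,0) = wr 0 * wl 0 := congrArg (fun x : H33 => x (0,0)) hk
    have e01 : k * zv 1 (0,1) = wr 0 * wl 1 := congrArg (fun x : H33 => x (0,1)) hk
    rw [zv_one_apply, mul_one, hwl0, hwr0, one_mul] at e00
    rw [zv_one_apply, mul_one, hwr0, hwl1, one_mul, e00] at e01
    have : (3:ℂ) = 0 := by linear_combination (2 - 4*ω)*hw2 + (2*ω+1)*e01
    norm_num at this
  have hBC : Submodule.span ℂ {tp wl wr} ≠ Submodule.span ℂ {tp wr wl} := by
    intro h
    have hm : tp wr wl ∈ Submodule.span ℂ {tp wl wr} := h ▸ Submodule.mem_span_singleton_self _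
    obtain ⟨k, hk⟩ := Submodule.mem_span_singleton.mp hm
    have e00 : k * (wl 0 * wr 0) = wr 0 * wl 0 := congrArg (fun x : H33 => x (0,0)) hk
    have e01 : k * (wl 0 * wr 1) = wr 0 * wl 1 := congrArg (fun x : H33 => x (0,1)) hk
    rw [hwl0, hwr0] at e00
    rw [hwl0, hwr0, hwr1, hwl1] at e01
    simp only [one_mul, mul_one] at e00 e01
    rw [e00] at e01
    have hfac : ω * (ω - 1) = 0 := by linear_combination (1/2)*e01
    rcases mul_eq_zero.mp hfac with h' | h'
    · exact hw_ne_zero h'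
    · have hω1 : ω = 1 := sub_eq_zero.mp h'
      have : (3:ℂ) = 0 := by linear_combination hw2 - (ω + 2)*hω1
      norm_num at this
  refine ⟨key, ?_⟩
  rw [key]
  exact Set.ncard_eq_three.mpr ⟨_, _, _, hAB, hAC, hBC, rfl⟩
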